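/- Let (X,d) be a metric space with |X| ≥ 3 and T : X → X satisfying P(Tx,Ty,Tz) < P(x,y,z) for all pairwise distinct x,y,z. If a Picard orbit xₙ (with all xₙ pairwise distinct) converges to x* and xₙ ≠ x* for all n, then x* is a fixed point of T. -/
import Mathlib


theorem stmt_15 {X : Type*} [MetricSpace X] (T : X → X)
    (h3 : ∃ a b c : X, a ≠ b ∧ b ≠ c ∧ a ≠ c)
    (h : ∀ x y z : X, x ≠ y → y ≠ z → x ≠ z →
      dist (T x) (T y) + dist (T y) (T z) + dist (T x) (T z) <
        dist x y + dist y z + dist x z)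
    (x : ℕ → X) (hx : ∀ n, x (n + 1) = T (x n))
    (hdist : ∀ m n : ℕ, m ≠ n → x m ≠ x n)
    (xs : X) (hlim : Filter.Tendsto x Filter.atTop (nhds xs))
    (hne : ∀ n, x n ≠ xs) :
    T xs = xs := by
  -- the shifted sequence tends to xs
  have hlim1 : Filter.Tendsto (fun n => x (n + 1)) Filter.atTop (nhds xs) :=
    hlim.comp (Filter.tendsto_add_atTop_nat 1)
  -- the bound sequence tends to 0
  have hb : Filter.Tendsto
      (fun n => dist (x (n + 1)) (x n) + dist (x n) xs + dist (x (n + 1)) xs)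
      Filter.atTop (nhds 0) := by
    have h1 : Filter.Tendsto (fun n => dist (x (n + 1)) (x n)) Filter.atTop (nhds 0) := by
      have := (hlim1.dist hlim)
      simpa using this
    have h2 : Filter.Tendsto (fun n => dist (x n) xs) Filter.atTop (nhds 0) :=
      tendsto_iff_dist_tendsto_zero.mp hlim
    have h3' : Filter.Tendsto (fun n => dist (x (n + 1)) xs) Filter.atTop (nhds 0) :=
      tendsto_iff_dist_tendsto_zero.mp hlim1
    simpa using (h1.add h2).add h3'
  have key : ∀ n, dist (x (n + 2)) (T xs) ≤
      dist (x (n + 1)) (x n) + dist (x n) xs + dist (x (n + 1)) xs := by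
    intro n
    have hlt := h (x (n + 1)) (x n) xs (hdist _ _ (by omega)) (hne n) (hne (n + 1))
    have e1 : x (n + 2) = T (x (n + 1)) := hx (n + 1)
    have e2 : x (n + 1) = T (x n) := hx n
    have hnn1 : 0 ≤ dist (T (x (n + 1))) (T (x n)) := dist_nonneg
    have hnn2 : 0 ≤ dist (T (x n)) (T xs) := dist_nonneg
    have : dist (T (x (n + 1))) (T xs) ≤
        dist (x (n + 1)) (x n) + dist (x n) xs + dist (x (n + 1)) xs := by linarith
    rw [e1]; exact this
  have hz : Filter.Tendsto (fun n => dist (x (n + 2)) (T xs)) Filter.atTop (nhds 0) :=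
    squeeze_zero (fun n => dist_nonneg) key hb
  have hlim2 : Filter.Tendsto (fun n => x (n + 2)) Filter.atTop (nhds (T xs)) :=
    tendsto_iff_dist_tendsto_zero.mpr hz
  have hlim2' : Filter.Tendsto (fun n => x (n + 2)) Filter.atTop (nhds xs) :=
    hlim.comp (Filter.tendsto_add_atTop_nat 2)
  exact tendsto_nhds_unique hlim2 hlim2'
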